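/- Let μ be a Radon measure on ℝⁿ with μ(B_R(x)) ≤ D ω_{n−1} R^{n−1} for all x ∈ ℝⁿ, R > 0. Then for all r, R > 0 and x ∈ ℝⁿ, the tail bound ∫_{ℝⁿ ∖ B_R(x)} ρ_x^r dμ ≤ 2^{n−1} exp(−3R²/(8r²)) D holds, where ρ_x^r(y) = (√(2π) r)^{−(n−1)} exp(−|y−x|²/(2r²)). -/

import Mathlib

open MeasureTheory
open Set

/-- The layer-cake integral: `∫_0^∞ √(2r² log(c/t))^m dt = (√2 r)^m c Γ(m/2+1)`. -/
lemma gauss_layer_integral (m : ℕ) (hm : 1 ≤ m) (r c : ℝ) (hr : 0 < r) (hc : 0 < c) :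
    IntegrableOn (fun t => Real.sqrt (2 * r ^ 2 * Real.log (c / t)) ^ m) (Set.Ioi 0) volume ∧
    ∫ t in Set.Ioi (0:ℝ), Real.sqrt (2 * r ^ 2 * Real.log (c / t)) ^ m =
      (Real.sqrt 2 * r) ^ m * c * Real.Gamma ((m : ℝ) / 2 + 1) := by
  set H : ℝ → ℝ := fun t => Real.sqrt (2 * r ^ 2 * Real.log (c / t)) ^ m with hH
  have himg : (fun u => c * Real.exp (-u)) '' Set.Ioi 0 = Set.Ioo 0 c := by
    ext t
    constructor
    · rintro ⟨u, hu, rfl⟩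
      have hu' : (0:ℝ) < u := hu
      constructor
      · positivity
      · have : Real.exp (-u) < 1 := by
          rw [Real.exp_lt_one_iff]; linarith
        calc c * Real.exp (-u) < c * 1 := by nlinarith
          _ = c := by ring
    · rintro ⟨ht0, htc⟩
      refine ⟨Real.log (c / t), ?_, ?_⟩
      · have : (1:ℝ) < c / t := (one_lt_div ht0).2 htc
        exact Real.log_pos this
      · show c * Real.exp (-Real.log (c / t)) = t
        rw [Real.exp_neg, Real.exp_log (by positivity)]
        field_simp
  have hderiv : ∀ u ∈ Set.Ioi (0:ℝ), HasDerivWithinAt (fun u => c * Real.exp (-u))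
      (-(c * Real.exp (-u))) (Set.Ioi 0) u := by
    intro u _
    have h1 : HasDerivAt (fun u : ℝ => c * Real.exp (-u)) (c * (Real.exp (-u) * (-1))) u := by
      exact (((Real.hasDerivAt_exp (-u)).comp u ((hasDerivAt_id u).neg)).const_mul c)
    have h2 : c * (Real.exp (-u) * (-1)) = -(c * Real.exp (-u)) := by ring
    rw [h2] at h1
    exact h1.hasDerivWithinAt
  have hinj : Set.InjOn (fun u => c * Real.exp (-u)) (Set.Ioi 0) := by
    intro u _ v _ h
    have : Real.exp (-u) = Real.exp (-v) := mul_left_cancel₀ hc.ne' h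
    have := Real.exp_injective this
    linarith [neg_injective this]
  have hEqOn : Set.EqOn (fun u => |(-(c * Real.exp (-u)))| • H (c * Real.exp (-u)))
      (fun u => ((Real.sqrt 2 * r) ^ m * c) * (Real.exp (-u) * u ^ ((m : ℝ) / 2 + 1 - 1)))
      (Set.Ioi 0) := by
    intro u hu
    have hu' : (0:ℝ) < u := hu
    have hlog : Real.log (c / (c * Real.exp (-u))) = u := by
      have h : c / (c * Real.exp (-u)) = Real.exp u := by
        rw [Real.exp_neg]; field_simp
      rw [h, Real.log_exp]
    simp only [hH, smul_eq_mul, abs_neg]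
    rw [hlog]
    have h2r : Real.sqrt (2 * r ^ 2 * u) = Real.sqrt 2 * r * Real.sqrt u := by
      rw [Real.sqrt_mul (by positivity), Real.sqrt_mul (by norm_num), Real.sqrt_sq hr.le]
    have hsqpow : Real.sqrt u ^ m = u ^ ((m : ℝ) / 2) := by
      rw [Real.sqrt_eq_rpow, ← Real.rpow_natCast (u ^ (1/2 : ℝ)) m, ← Real.rpow_mul hu'.le]
      congr 1
      ring
    have habs : |c * Real.exp (-u)| = c * Real.exp (-u) := abs_of_pos (by positivity)
    rw [habs, h2r, mul_pow, hsqpow]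
    have : (m : ℝ) / 2 + 1 - 1 = (m : ℝ) / 2 := by ring
    rw [this]
    ring
  have hGammaInt : IntegrableOn (fun u : ℝ => Real.exp (-u) * u ^ ((m : ℝ) / 2 + 1 - 1))
      (Set.Ioi 0) volume := Real.GammaIntegral_convergent (by positivity)
  have hIntIoo : IntegrableOn H (Set.Ioo 0 c) volume := by
    rw [← himg, integrableOn_image_iff_integrableOn_abs_deriv_smul measurableSet_Ioi hderiv hinj]
    exact MeasureTheory.IntegrableOn.congr_fun (hGammaInt.const_mul _) hEqOn.symm measurableSet_Ioi
  have hzero : Set.EqOn H (fun _ => (0:ℝ)) (Set.Ici c) := by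
    intro t ht
    have ht' : c ≤ t := ht
    have ht0 : (0:ℝ) < t := lt_of_lt_of_le hc ht'
    have h1 : Real.log (c / t) ≤ 0 :=
      Real.log_nonpos (le_of_lt (div_pos hc ht0)) ((div_le_one ht0).2 ht')
    have h2 : 2 * r ^ 2 * Real.log (c / t) ≤ 0 := by nlinarith [sq_nonneg r]
    simp only [hH]
    rw [Real.sqrt_eq_zero_of_nonpos h2, zero_pow (by omega)]
  have hIntIci : IntegrableOn H (Set.Ici c) volume :=
    (integrableOn_zero).congr_fun hzero.symm measurableSet_Ici
  have hunion : Set.Ioo (0:ℝ) c ∪ Set.Ici c = Set.Ioi 0 := Set.Ioo_union_Ici_eq_Ioi hc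
  have hdisj : Disjoint (Set.Ioo (0:ℝ) c) (Set.Ici c) := by
    rw [Set.disjoint_left]
    rintro a ⟨_, h1⟩ h2
    exact absurd h2 (not_le.2 h1)
  constructor
  · rw [← hunion]; exact hIntIoo.union hIntIci
  · rw [← hunion, setIntegral_union hdisj measurableSet_Ici hIntIoo hIntIci]
    have hz : ∫ t in Set.Ici c, H t = 0 := by
      rw [setIntegral_congr_fun measurableSet_Ici hzero]; simp
    rw [hz, add_zero, ← himg,
      integral_image_eq_integral_abs_deriv_smul measurableSet_Ioi hderiv hinj,
      setIntegral_congr_fun measurableSet_Ioi hEqOn, integral_const_mul,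
      ← Real.Gamma_eq_integral (by positivity)]

/-- Sharp whole-space bound: `∫ ρ_x^r dμ ≤ D` when `μ(B_s(x)) ≤ D ω s^m`. -/
lemma gaussian_kernel_total_bound {X : Type*} [NormedAddCommGroup X] [MeasurableSpace X]
    [OpensMeasurableSpace X] (μ : Measure X) (m : ℕ) (hm : 1 ≤ m) (D ω : ℝ) (hD : 0 < D)
    (hω : 0 < ω) (hωΓ : ω * Real.Gamma ((m : ℝ) / 2 + 1) = Real.sqrt Real.pi ^ m)
    (x : X) (r : ℝ) (hr : 0 < r)
    (hμx : ∀ s : ℝ, 0 < s → μ (Metric.ball x s) ≤ ENNReal.ofReal (D * ω * s ^ m)) :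
    ∫⁻ y, ENNReal.ofReal (((Real.sqrt (2 * Real.pi) * r) ^ m)⁻¹ *
      Real.exp (-‖y - x‖ ^ 2 / (2 * r ^ 2))) ∂μ ≤ ENNReal.ofReal D := by
  have hπ : (0:ℝ) < Real.sqrt (2 * Real.pi) := Real.sqrt_pos.2 (by positivity)
  set c : ℝ := ((Real.sqrt (2 * Real.pi) * r) ^ m)⁻¹ with hcdef
  have hc : 0 < c := by positivity
  set f : X → ℝ := fun y => c * Real.exp (-‖y - x‖ ^ 2 / (2 * r ^ 2)) with hfdef
  have hf_meas : Measurable f := by fun_prop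
  have hf_nn : 0 ≤ᵐ[μ] f := Filter.Eventually.of_forall fun y => by positivity
  rw [lintegral_eq_lintegral_meas_lt μ hf_nn hf_meas.aemeasurable]
  set G : ℝ → ℝ := fun t => D * ω * Real.sqrt (2 * r ^ 2 * Real.log (c / t)) ^ m with hGdef
  have hGm : Measurable fun t => ENNReal.ofReal (G t) := by
    apply Measurable.ennreal_ofReal
    exact measurable_const.mul ((Real.continuous_sqrt.measurable.comp
      (measurable_const.mul (Real.measurable_log.comp
        (measurable_const.div measurable_id)))).pow_const m)
  have step1 : ∫⁻ t in Set.Ioi (0:ℝ), μ {a | t < f a} ≤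
      ∫⁻ t in Set.Ioi (0:ℝ), ENNReal.ofReal (G t) := by
    apply setLIntegral_mono hGm
    intro t ht
    set s := Real.sqrt (2 * r ^ 2 * Real.log (c / t)) with hsdef
    have hsub : {a | t < f a} ⊆ Metric.ball x s := by
      intro y hy
      simp only [Set.mem_setOf_eq, hfdef] at hy
      rw [mem_ball_iff_norm]
      have ht' : (0:ℝ) < t := ht
      have h1 : t / c < Real.exp (-‖y - x‖ ^ 2 / (2 * r ^ 2)) :=
        (div_lt_iff₀ hc).2 (by rw [mul_comm]; exact hy)
      have h2 : Real.log (t / c) < -‖y - x‖ ^ 2 / (2 * r ^ 2) := by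
        have := Real.log_lt_log (by positivity) h1
        rwa [Real.log_exp] at this
      have hlog : Real.log (c / t) = -Real.log (t / c) := by
        rw [← Real.log_inv, inv_div]
      have h3 : ‖y - x‖ ^ 2 < 2 * r ^ 2 * Real.log (c / t) := by
        rw [hlog]
        have hr2 : (0:ℝ) < 2 * r ^ 2 := by positivity
        have h5 := mul_lt_mul_of_pos_left h2 hr2
        rw [show 2 * r ^ 2 * (-‖y - x‖ ^ 2 / (2 * r ^ 2)) = -‖y - x‖ ^ 2 by
          field_simp] at h5
        linarith
      exact (Real.lt_sqrt (norm_nonneg _)).2 h3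
    rcases le_or_gt s 0 with hs | hs
    · have : {a | t < f a} = ∅ := by
        rw [Set.eq_empty_iff_forall_notMem]
        intro y hy
        have := hsub hy
        rw [Metric.ball_eq_empty.2 hs] at this
        exact this
      rw [this, measure_empty]
      exact zero_le
    · calc μ {a | t < f a} ≤ μ (Metric.ball x s) := measure_mono hsub
        _ ≤ ENNReal.ofReal (D * ω * s ^ m) := hμx s hs
  refine le_trans step1 ?_
  obtain ⟨hInt, hVal⟩ := gauss_layer_integral m hm r c hr hc
  have hGnn : 0 ≤ᵐ[volume.restrict (Set.Ioi (0:ℝ))] G :=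
    Filter.Eventually.of_forall fun t => by positivity
  have hGint : IntegrableOn G (Set.Ioi 0) volume := hInt.const_mul _
  rw [← ofReal_integral_eq_lintegral_ofReal hGint hGnn]
  apply ENNReal.ofReal_le_ofReal
  have : ∫ t in Set.Ioi (0:ℝ), G t =
      D * ω * ((Real.sqrt 2 * r) ^ m * c * Real.Gamma ((m : ℝ) / 2 + 1)) := by
    rw [hGdef]
    simp only [integral_const_mul]  -- D*ω pulled out? G t = (D*ω) * ...
    rw [hVal]
  rw [this]
  have hsplit : Real.sqrt (2 * Real.pi) = Real.sqrt 2 * Real.sqrt Real.pi :=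
    Real.sqrt_mul (by norm_num) _
  have hΓpos : 0 < Real.Gamma ((m : ℝ) / 2 + 1) := Real.Gamma_pos_of_pos (by positivity)
  have hpn : (0:ℝ) < Real.sqrt Real.pi ^ m := by positivity
  have hne2 : (Real.sqrt 2 * r) ^ m ≠ 0 := by positivity
  have h1 : (Real.sqrt 2 * r) ^ m * c = (Real.sqrt Real.pi ^ m)⁻¹ := by
    rw [hcdef, hsplit]
    have hmp : (Real.sqrt 2 * Real.sqrt Real.pi * r) ^ m =
        (Real.sqrt 2 * r) ^ m * Real.sqrt Real.pi ^ m := by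
      rw [← mul_pow]; ring
    rw [hmp, mul_inv, ← mul_assoc, mul_inv_cancel₀ hne2, one_mul]
  have hkey : ω * ((Real.sqrt 2 * r) ^ m * c * Real.Gamma ((m : ℝ) / 2 + 1)) = 1 := by
    rw [show (Real.sqrt 2 * r) ^ m * c * Real.Gamma ((m : ℝ) / 2 + 1) =
      ((Real.sqrt 2 * r) ^ m * c) * Real.Gamma ((m : ℝ) / 2 + 1) from rfl, h1,
      mul_comm ((Real.sqrt Real.pi ^ m)⁻¹), ← mul_assoc, hωΓ]
    exact mul_inv_cancel₀ hpn.ne'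
  have hfin : D * ω * ((Real.sqrt 2 * r) ^ m * c * Real.Gamma ((m : ℝ) / 2 + 1)) = D := by
    rw [mul_assoc, hkey, mul_one]
  exact le_of_eq hfin

/- STATEMENT 6: tail bound ∫_{ℝⁿ∖B_R(x)} ρ_x^r dμ ≤ 2^{n−1} exp(−3R²/(8r²)) D for a measure μ
with μ(B_R(x)) ≤ D ω_{n−1} R^{n−1}. -/
theorem gaussian_kernel_tail_bound
    (n : ℕ) (hn : 2 ≤ n) (μ : Measure (EuclideanSpace ℝ (Fin n)))
    [IsLocallyFiniteMeasure μ] (D : ℝ) (hD : 0 < D)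
    (hμ : ∀ (x : EuclideanSpace ℝ (Fin n)) (R : ℝ), 0 < R →
      μ (Metric.ball x R) ≤ ENNReal.ofReal
        (D * (volume (Metric.ball (0 : EuclideanSpace ℝ (Fin (n - 1))) 1)).toReal *
          R ^ (n - 1)))
    (x : EuclideanSpace ℝ (Fin n)) (r R : ℝ) (hr : 0 < r) (hR : 0 < R) :
    ∫⁻ y in (Metric.ball x R)ᶜ, ENNReal.ofReal
        (((Real.sqrt (2 * Real.pi) * r) ^ (n - 1))⁻¹ *
          Real.exp (-‖y - x‖ ^ 2 / (2 * r ^ 2))) ∂μ ≤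
      ENNReal.ofReal (2 ^ (n - 1) * Real.exp (-3 * R ^ 2 / (8 * r ^ 2)) * D) := by
  haveI : Nonempty (Fin (n - 1)) := ⟨⟨0, by omega⟩⟩
  set ω : ℝ := (volume (Metric.ball (0 : EuclideanSpace ℝ (Fin (n - 1))) 1)).toReal with hωdef
  have hΓpos : 0 < Real.Gamma (((n - 1 : ℕ) : ℝ) / 2 + 1) := Real.Gamma_pos_of_pos (by positivity)
  have hωval : ω = Real.sqrt Real.pi ^ (n - 1) / Real.Gamma (((n - 1 : ℕ) : ℝ) / 2 + 1) := by
    rw [hωdef, EuclideanSpace.volume_ball]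
    simp only [Fintype.card_fin]
    rw [ENNReal.ofReal_one, one_pow, one_mul, ENNReal.toReal_ofReal (by positivity)]
  have hω : 0 < ω := by rw [hωval]; positivity
  have hωΓ : ω * Real.Gamma (((n - 1 : ℕ) : ℝ) / 2 + 1) = Real.sqrt Real.pi ^ (n - 1) := by
    rw [hωval, div_mul_cancel₀ _ hΓpos.ne']
  have htotal := gaussian_kernel_total_bound μ (n - 1) (by omega) D ω hD hω hωΓ x (2 * r)
    (by positivity) (fun s hs => hμ x s hs)
  set K : ℝ := 2 ^ (n - 1) * Real.exp (-3 * R ^ 2 / (8 * r ^ 2)) with hKdef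
  have hK : 0 ≤ K := by positivity
  have hmeas : Measurable fun y : EuclideanSpace ℝ (Fin n) =>
      ENNReal.ofReal K * ENNReal.ofReal (((Real.sqrt (2 * Real.pi) * (2 * r)) ^ (n - 1))⁻¹ *
        Real.exp (-‖y - x‖ ^ 2 / (2 * (2 * r) ^ 2))) := by
    apply Measurable.const_mul
    apply Measurable.ennreal_ofReal
    apply Measurable.const_mul
    exact (Real.continuous_exp.measurable.comp (by fun_prop))
  calc ∫⁻ y in (Metric.ball x R)ᶜ, ENNReal.ofReal
        (((Real.sqrt (2 * Real.pi) * r) ^ (n - 1))⁻¹ *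
          Real.exp (-‖y - x‖ ^ 2 / (2 * r ^ 2))) ∂μ
      ≤ ∫⁻ y in (Metric.ball x R)ᶜ, ENNReal.ofReal K *
          ENNReal.ofReal (((Real.sqrt (2 * Real.pi) * (2 * r)) ^ (n - 1))⁻¹ *
            Real.exp (-‖y - x‖ ^ 2 / (2 * (2 * r) ^ 2))) ∂μ := by
        apply setLIntegral_mono hmeas
        intro y hy
        have hd : R ≤ ‖y - x‖ := by
          rw [Set.mem_compl_iff, Metric.mem_ball, dist_eq_norm] at hy
          exact not_lt.1 hy
        rw [← ENNReal.ofReal_mul hK]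
        apply ENNReal.ofReal_le_ofReal
        have hπ : (0:ℝ) < Real.sqrt (2 * Real.pi) := Real.sqrt_pos.2 (by positivity)
        have hrw : K * (((Real.sqrt (2 * Real.pi) * (2 * r)) ^ (n - 1))⁻¹ *
            Real.exp (-‖y - x‖ ^ 2 / (2 * (2 * r) ^ 2))) =
            ((Real.sqrt (2 * Real.pi) * r) ^ (n - 1))⁻¹ *
              (Real.exp (-3 * R ^ 2 / (8 * r ^ 2)) * Real.exp (-‖y - x‖ ^ 2 / (8 * r ^ 2))) := by
          rw [show Real.sqrt (2 * Real.pi) * (2 * r) = 2 * (Real.sqrt (2 * Real.pi) * r) by ring,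
            mul_pow, show (2 * (2 * r) ^ 2 : ℝ) = 8 * r ^ 2 by ring, hKdef]
          have h2 : ((2:ℝ) ^ (n - 1)) ≠ 0 := by positivity
          have h3 : ((Real.sqrt (2 * Real.pi) * r) ^ (n - 1) : ℝ) ≠ 0 := by positivity
          field_simp
        rw [hrw]
        have hsq : R ^ 2 ≤ ‖y - x‖ ^ 2 := by nlinarith [norm_nonneg (y - x)]
        have h8 : (0:ℝ) < 8 * r ^ 2 := by positivity
        have hexp : Real.exp (-‖y - x‖ ^ 2 / (2 * r ^ 2)) ≤
            Real.exp (-3 * R ^ 2 / (8 * r ^ 2)) * Real.exp (-‖y - x‖ ^ 2 / (8 * r ^ 2)) := by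
          rw [← Real.exp_add]
          apply Real.exp_le_exp.2
          rw [show -‖y - x‖ ^ 2 / (2 * r ^ 2) =
              (-3 * ‖y - x‖ ^ 2 + -‖y - x‖ ^ 2) / (8 * r ^ 2) by field_simp; ring,
            show -3 * R ^ 2 / (8 * r ^ 2) + -‖y - x‖ ^ 2 / (8 * r ^ 2) =
              (-3 * R ^ 2 + -‖y - x‖ ^ 2) / (8 * r ^ 2) by ring]
          exact (div_le_div_iff_of_pos_right h8).2 (by linarith)
        exact mul_le_mul_of_nonneg_left hexp (by positivity)
    _ = ENNReal.ofReal K * ∫⁻ y in (Metric.ball x R)ᶜ,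
          ENNReal.ofReal (((Real.sqrt (2 * Real.pi) * (2 * r)) ^ (n - 1))⁻¹ *
            Real.exp (-‖y - x‖ ^ 2 / (2 * (2 * r) ^ 2))) ∂μ :=
        lintegral_const_mul' _ _ ENNReal.ofReal_ne_top
    _ ≤ ENNReal.ofReal K * ENNReal.ofReal D :=
        mul_le_mul_right ((setLIntegral_le_lintegral _ _).trans htotal) _
    _ = ENNReal.ofReal (2 ^ (n - 1) * Real.exp (-3 * R ^ 2 / (8 * r ^ 2)) * D) := by
        rw [← ENNReal.ofReal_mul hK]
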